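/- Let μ be a strong limit cardinal of cofinality ℵ₀. If there is a universal locally finite group of cardinality μ, then for every cardinal λ < μ and every ℵ₀-indecomposable locally finite group H of cardinality λ there exist an index set I of cardinality ≤ μ and a family ⟨G_α : α ∈ I⟩ of locally finite groups, each of cardinality μ and each containing H as a subgroup, such that every locally finite group G of cardinality μ containing H as a subgroup embeds into some G_α over H. -/

import Mathlib

universe u
open Cardinal

lemma aux_mk_closure_le {G : Type u} [Group G] (s : Set G) :
    #(Subgroup.closure s : Set G) ≤ max ℵ₀ (#s + #s) := by
  classical
  set t : Set G := s ∪ s⁻¹ with ht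
  have hrange : (Subgroup.closure s : Set G) ⊆
      Set.range (fun l : List t => (l.map Subtype.val).prod) := by
    intro x hx
    have hx' : x ∈ Submonoid.closure t := by
      rw [ht, ← Subgroup.closure_toSubmonoid]
      exact hx
    obtain ⟨l, hl, hprod⟩ := Submonoid.exists_list_of_mem_closure hx'
    refine ⟨l.attach.map (fun y => (⟨y.1, hl y.1 y.2⟩ : t)), ?_⟩
    simp only [List.map_map]
    simpa using hprod
  have h1 : #(Subgroup.closure s : Set G) ≤ #(List t) :=
    (Cardinal.mk_le_mk_of_subset hrange).trans Cardinal.mk_range_le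
  have h2 : #(List t) ≤ max ℵ₀ #t := Cardinal.mk_list_le_max t
  have h3 : #t ≤ #s + #s := by
    refine (Cardinal.mk_union_le s s⁻¹).trans ?_
    have hinv : #(s⁻¹ : Set G) ≤ #s :=
      Cardinal.mk_preimage_of_injective Inv.inv s inv_injective
    exact add_le_add le_rfl hinv
  exact h1.trans (h2.trans (max_le_max le_rfl h3))

section Main

variable {Gs : Type u} [Group Gs]

/-- Main counting lemma: chain of small subgroups covering a group of size μ, cof ℵ₀. -/
lemma aux_chain (μ : Cardinal.{u}) (hsl : μ.IsStrongLimit) (hcof : μ.ord.cof = ℵ₀)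
    (hGlf : ∀ s : Finset Gs, Set.Finite ((Subgroup.closure (s : Set Gs) : Subgroup Gs) : Set Gs))
    (hGc : #Gs = μ) :
    ∃ K : ℕ → Subgroup Gs, Monotone K ∧ (∀ x : Gs, ∃ n, x ∈ K n) ∧ ∀ n, #(K n) < μ := by
  classical
  have haleμ : ℵ₀ ≤ μ := hsl.aleph0_le
  -- cofinal ordinal sequence
  obtain ⟨ι, fo, hlsub, hmkι⟩ := Ordinal.exists_lsub_cof μ.ord
  rw [hcof] at hmkι
  have : Nonempty (ι ≃ ULift.{u} ℕ) := by
    rw [← Cardinal.eq]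
    simp [hmkι]
  obtain ⟨q⟩ := this
  set go : ℕ → Ordinal.{u} := fun n => fo (q.symm ⟨n⟩) with hgo
  have hgolt : ∀ n, go n < μ.ord := by
    intro n
    rw [← hlsub]
    exact Ordinal.lt_lsub fo _
  have hgocof : ∀ o < μ.ord, ∃ n, o ≤ go n := by
    intro o ho
    rw [← hlsub, Ordinal.lt_lsub_iff] at ho
    obtain ⟨i, hi⟩ := ho
    refine ⟨(q i).down, ?_⟩
    have : q.symm ⟨(q i).down⟩ = i := by
      have : (⟨(q i).down⟩ : ULift ℕ) = q i := rfl
      rw [this, Equiv.symm_apply_apply]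
    show o ≤ fo (q.symm ⟨(q i).down⟩)
    rw [this]
    exact hi
  -- transfer to toType
  obtain ⟨b⟩ : Nonempty (Gs ≃ μ.ord.ToType) := by
    rw [← Cardinal.eq, hGc, Cardinal.mk_ord_toType]
  set E := (Ordinal.ToType.mk (o := μ.ord)) with hE
  set g : ℕ → μ.ord.ToType := fun n => E ⟨go n, hgolt n⟩ with hg
  set g' : ℕ → μ.ord.ToType :=
    fun n => Nat.rec (g 0) (fun k ih => max ih (g (k + 1))) n with hg'
  have hg'mono : Monotone g' := monotone_nat_of_le_succ fun n => le_max_left _ _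
  have hgg' : ∀ n, g n ≤ g' n := by
    intro n
    cases n with
    | zero => exact le_refl _
    | succ k => exact le_max_right _ _
  have hcov : ∀ x : μ.ord.ToType, ∃ n, x ≤ g' n := by
    intro x
    obtain ⟨n, hn⟩ := hgocof (E.symm x).1 (E.symm x).2
    refine ⟨n, le_trans ?_ (hgg' n)⟩
    have : x = E (E.symm x) := (E.apply_symm_apply x).symm
    rw [this, hg]
    exact E.le_iff_le.2 hn
  -- the chain
  set S : ℕ → Set Gs := fun n => b ⁻¹' Set.Iic (g' n) with hS
  refine ⟨fun n => Subgroup.closure (S n), ?_, ?_, ?_⟩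
  · intro m n hmn
    exact Subgroup.closure_mono (Set.preimage_mono (Set.Iic_subset_Iic.2 (hg'mono hmn)))
  · intro x
    obtain ⟨n, hn⟩ := hcov (b x)
    exact ⟨n, Subgroup.subset_closure hn⟩
  · intro n
    have hSle : #(S n) < μ := by
      have h1 : #(S n) ≤ #(Set.Iic (g' n)) :=
        Cardinal.mk_preimage_of_injective b _ b.injective
      have h2 : #(Set.Iic (g' n)) < μ := by
        have hIio : #(Set.Iio (g' n)) < μ := Cardinal.mk_Iio_ord_toType (g' n)
        have hun : Set.Iic (g' n) ⊆ Set.Iio (g' n) ∪ {g' n} := by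
          intro y hy
          rcases lt_or_eq_of_le (Set.mem_Iic.1 hy) with h | h
          · exact Or.inl h
          · exact Or.inr h
        refine lt_of_le_of_lt ((Cardinal.mk_le_mk_of_subset hun).trans
          (Cardinal.mk_union_le _ _)) ?_
        refine Cardinal.add_lt_of_lt haleμ hIio ?_
        exact lt_of_le_of_lt (by simp) (Cardinal.one_lt_aleph0.trans_le haleμ)
      exact lt_of_le_of_lt h1 h2
    rcases lt_or_ge #(S n) ℵ₀ with hsmall | hbig
    · have hfin : (S n).Finite := by
        rwa [Cardinal.lt_aleph0_iff_set_finite] at hsmall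
      have : ((Subgroup.closure (S n) : Subgroup Gs) : Set Gs).Finite := by
        have := hGlf hfin.toFinset
        rwa [Set.Finite.coe_toFinset] at this
      have : #((Subgroup.closure (S n) : Subgroup Gs) : Set Gs) < ℵ₀ := by
        rwa [Cardinal.lt_aleph0_iff_set_finite]
      exact lt_of_lt_of_le this haleμ
    · have h1 : #(Subgroup.closure (S n) : Set Gs) ≤ max ℵ₀ (#(S n) + #(S n)) :=
        aux_mk_closure_le (S n)
      have h2 : max ℵ₀ (#(S n) + #(S n)) = #(S n) + #(S n) :=
        max_eq_right (hbig.trans le_self_add)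
      have h3 : #(S n) + #(S n) < μ := Cardinal.add_lt_of_lt haleμ hSle hSle
      calc #(Subgroup.closure (S n)) ≤ #(S n) + #(S n) := by rw [← h2]; exact h1
        _ < μ := h3

end Main

/-- A group is locally finite if every finitely generated subgroup is finite. -/
def LocallyFiniteGroup (G : Type u) [Group G] : Prop :=
  ∀ s : Finset G, Set.Finite ((Subgroup.closure (s : Set G) : Subgroup G) : Set G)

/-- A group `G` is `θ`-indecomposable when every `⊆`-increasing sequence
`⟨M_i : i < θ⟩` of subgroups of `G` with union `G` contains `G` as a member. -/
def GroupIndecomp (θ : Cardinal.{u}) (G : Type u) [Group G] : Prop :=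
  ∀ M : θ.ord.ToType → Subgroup G, Monotone M → (⨆ i, M i) = ⊤ → ∃ i, M i = ⊤

/-- `G` is a universal locally finite group of cardinality `μ`. -/
def UniversalLF (μ : Cardinal.{u}) (G : Type u) [Group G] : Prop :=
  LocallyFiniteGroup G ∧ #G = μ ∧
    ∀ (H : Type u) (_ : Group H), LocallyFiniteGroup H → #H = μ →
      ∃ f : H →* G, Function.Injective f

/-- If `μ` is a strong limit cardinal of cofinality `ℵ₀` and there is a
universal locally finite group of cardinality `μ`, then for every `λ < μ` and every
`ℵ₀`-indecomposable locally finite group `H` of cardinality `λ` there is a family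
`⟨G_α : α ∈ I⟩`, `|I| ≤ μ`, of locally finite groups of cardinality `μ` extending `H`
such that every locally finite group of cardinality `μ` extending `H` embeds into some
`G_α` over `H`. -/
theorem universal_implies_family (μ : Cardinal.{u})
    (hsl : μ.IsStrongLimit) (hcof : μ.ord.cof = ℵ₀)
    (huniv : ∃ (G : Type u) (_ : Group G), UniversalLF μ G)
    (lam : Cardinal.{u}) (hlam : lam < μ)
    (H : Type u) [Group H] (hH : LocallyFiniteGroup H)
    (hHind : GroupIndecomp ℵ₀ H) (hHc : #H = lam) :
    ∃ (I : Type u), #I ≤ μ ∧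
      ∃ (Gf : I → Type u) (_ : ∀ α, Group (Gf α)) (e : ∀ α, H →* Gf α),
        (∀ α, LocallyFiniteGroup (Gf α) ∧ #(Gf α) = μ ∧ Function.Injective (e α)) ∧
        ∀ (G : Type u) (_ : Group G), LocallyFiniteGroup G → #G = μ →
          ∀ eG : H →* G, Function.Injective eG →
            ∃ α, ∃ f : G →* Gf α, Function.Injective f ∧ f.comp eG = e α := by
  classical
  obtain ⟨Gs, instGs, hGlf, hGc, hGuniv⟩ := huniv
  have haleμ : ℵ₀ ≤ μ := hsl.aleph0_le
  obtain ⟨K, hKmono, hKcov, hKcard⟩ := aux_chain μ hsl hcof hGlf hGc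
  -- index type
  set Iset : Set (H →* Gs) := {p | Function.Injective p} with hIset
  refine ⟨↥Iset, ?_, fun _ => Gs, fun _ => instGs, fun α => α.1,
    fun α => ⟨hGlf, hGc, α.2⟩, ?_⟩
  · -- cardinality bound
    set A : ULift.{u} ℕ → Set (H →* Gs) := fun n => {p | ∀ h, p h ∈ K n.down} with hA
    -- every hom lands in some K n, by ℵ₀-indecomposability
    have hsub : Iset ⊆ ⋃ n, A n := by
      intro p _
      set E₀ := (Ordinal.ToType.mk (o := (ℵ₀ : Cardinal.{u}).ord)) with hE₀
      have hω : ∀ i : (ℵ₀ : Cardinal.{u}).ord.ToType, ∃ n : ℕ, (E₀.symm i).1 = (n : Ordinal) := by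
        intro i
        have h2 := (E₀.symm i).2
        simp only [Set.mem_Iio] at h2
        exact Ordinal.lt_omega0.1 (lt_of_lt_of_eq h2 Cardinal.ord_aleph0)
      set nn : (ℵ₀ : Cardinal.{u}).ord.ToType → ℕ := fun i => (hω i).choose with hnn
      have hnnspec : ∀ i, (E₀.symm i).1 = ((nn i : ℕ) : Ordinal) := fun i => (hω i).choose_spec
      have hnnmono : Monotone nn := by
        intro i j hij
        have h1 : (E₀.symm i).1 ≤ (E₀.symm j).1 := E₀.symm.le_iff_le.2 hij
        rw [hnnspec i, hnnspec j] at h1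
        exact_mod_cast h1
      set M : (ℵ₀ : Cardinal.{u}).ord.ToType → Subgroup H := fun i => (K (nn i)).comap p with hM
      have hMmono : Monotone M := fun i j hij => Subgroup.comap_mono (hKmono (hnnmono hij))
      have hMsup : (⨆ i, M i) = ⊤ := by
        rw [eq_top_iff]
        intro x _
        obtain ⟨n, hn⟩ := hKcov (p x)
        have hlt : ((n : Ordinal.{u})) < (ℵ₀ : Cardinal.{u}).ord := by
          rw [Cardinal.ord_aleph0]
          exact Ordinal.nat_lt_omega0 n
        set i : (ℵ₀ : Cardinal.{u}).ord.ToType := E₀ ⟨(n : Ordinal), hlt⟩ with hi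
        have hnni : nn i = n := by
          have h1 : (E₀.symm i).1 = ((n : Ordinal)) := by
            rw [hi, E₀.symm_apply_apply]
          have h2 := hnnspec i
          rw [h1] at h2
          exact_mod_cast h2.symm
        have hxM : x ∈ M i := by
          rw [hM]
          simp only [Subgroup.mem_comap]
          rw [hnni]
          exact hn
        exact (le_iSup M i) hxM
      obtain ⟨i, hi⟩ := hHind M hMmono hMsup
      refine Set.mem_iUnion.2 ⟨⟨nn i⟩, ?_⟩
      intro h
      have : h ∈ M i := hi ▸ Subgroup.mem_top h
      simpa [hM, Subgroup.mem_comap] using this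
    -- counting
    have hpow : ∀ n : ℕ, #(K n) ^ lam ≤ μ := by
      intro n
      rcases haleμ.lt_or_eq with hlt | heq
      · set ν : Cardinal.{u} := max (max #(K n) lam) ℵ₀ with hν
        have hνμ : ν < μ := max_lt (max_lt (hKcard n) hlam) hlt
        have hνinf : ℵ₀ ≤ ν := le_max_right _ _
        have h1 : #(K n) ^ lam ≤ ν ^ lam :=
          Cardinal.power_le_power_right ((le_max_left _ _).trans (le_max_left _ _))
        have h2 : ν ^ lam ≤ ν ^ ν := by
          refine Cardinal.power_le_power_left ?_ ((le_max_right _ _).trans (le_max_left _ _))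
          exact ne_of_gt (lt_of_lt_of_le Cardinal.aleph0_pos hνinf)
        have h3 : ν ^ ν = 2 ^ ν := Cardinal.power_self_eq hνinf
        exact (h1.trans (h2.trans h3.le)).trans (hsl.two_power_lt hνμ).le
      · have hK : #(K n) < ℵ₀ := heq ▸ hKcard n
        have hl : lam < ℵ₀ := heq ▸ hlam
        exact (Cardinal.power_lt_aleph0 hK hl).le.trans haleμ
    have hAcard : ∀ n : ULift.{u} ℕ, #(A n) ≤ μ := by
      intro n
      have hinj : Function.Injective
          (fun (p : A n) (h : H) => (⟨p.1 h, p.2 h⟩ : K n.down)) := by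
        intro p q hpq
        apply Subtype.ext
        apply MonoidHom.ext
        intro h
        have := congrFun hpq h
        exact congrArg Subtype.val this
      calc #(A n) ≤ #(H → K n.down) := Cardinal.mk_le_of_injective hinj
        _ = #(K n.down) ^ lam := by rw [← Cardinal.power_def, hHc]
        _ ≤ μ := hpow n.down
    calc #↥Iset ≤ #↥(⋃ n, A n) := Cardinal.mk_le_mk_of_subset hsub
      _ ≤ #(ULift.{u} ℕ) * ⨆ n, #(A n) := Cardinal.mk_iUnion_le A
      _ ≤ ℵ₀ * μ := by
          refine mul_le_mul' (by simp) (ciSup_le' hAcard)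
      _ = μ := Cardinal.mul_eq_right haleμ haleμ Cardinal.aleph0_ne_zero
  · -- universality
    intro G instG hGlf' hGc' eG heG
    obtain ⟨f, hf⟩ := hGuniv G instG hGlf' hGc'
    exact ⟨⟨f.comp eG, hf.comp heG⟩, f, hf, rfl⟩
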